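/- Let a, c ∈ ℝ, b > 0, ε > 1 and 0 < x < 1/ε. Then F_b(λ;x) := Σ_{n=0}^∞ (a+ελ)_n·(b)_n/((c+λ)_n·n!)·x^n tends to (1−εx)^{−b} as λ → +∞. -/

import Mathlib

open Real Filter
open Topology

/-- The Pochhammer symbol (rising factorial) (q)_n for real q. -/
noncomputable def poch (q : ℝ) (n : ℕ) : ℝ := (ascPochhammer ℝ n).eval q

lemma poch_zero (q : ℝ) : poch q 0 = 1 := by simp [poch]

lemma poch_succ (q : ℝ) (n : ℕ) : poch q (n + 1) = poch q n * (q + n) := by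
  simp [poch, ascPochhammer_succ_right]

lemma poch_pos {q : ℝ} (hq : 0 < q) (n : ℕ) : 0 < poch q n := by
  induction n with
  | zero => simp [poch_zero]
  | succ n ih => rw [poch_succ]; positivity

/-- (p+n)/(q+n) → 1 over ℕ. -/
lemma nat_ratio_tendsto (p q : ℝ) :
    Tendsto (fun n : ℕ => (p + n) / (q + n)) atTop (𝓝 1) := by
  have hq : Tendsto (fun n : ℕ => q + (n : ℝ)) atTop atTop :=
    tendsto_atTop_add_const_left _ _ tendsto_natCast_atTop_atTop
  have h0 : Tendsto (fun n : ℕ => (p - q) / (q + n)) atTop (𝓝 0) := by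
    simpa [div_eq_mul_inv] using hq.inv_tendsto_atTop.const_mul (p - q)
  have := h0.const_add 1
  rw [add_zero] at this
  refine this.congr' ?_
  filter_upwards [hq.eventually_gt_atTop 0] with n hn
  field_simp
  ring

lemma lam_ratio_tendsto (p q ε : ℝ) :
    Tendsto (fun lam : ℝ => (p + ε * lam) / (q + lam)) atTop (𝓝 ε) := by
  have hq : Tendsto (fun lam : ℝ => q + lam) atTop atTop :=
    tendsto_atTop_add_const_left _ _ tendsto_id
  have h0 : Tendsto (fun lam : ℝ => (p - ε * q) / (q + lam)) atTop (𝓝 0) := by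
    simpa [div_eq_mul_inv] using hq.inv_tendsto_atTop.const_mul (p - ε * q)
  have := h0.const_add ε
  rw [add_zero] at this
  refine this.congr' ?_
  filter_upwards [hq.eventually_gt_atTop 0] with lam hn
  field_simp
  ring

lemma summable_c {b : ℝ} (hb : 0 < b) {r : ℝ} (hr0 : 0 < r) (hr1 : r < 1) :
    Summable (fun n : ℕ => poch b n / (Nat.factorial n : ℝ) * r ^ n) := by
  have hpos : ∀ n : ℕ, 0 < poch b n / (Nat.factorial n : ℝ) * r ^ n := by
    intro n
    have := poch_pos hb n
    have : (0:ℝ) < Nat.factorial n := by positivity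
    positivity
  refine summable_of_ratio_test_tendsto_lt_one hr1
    (Eventually.of_forall fun n => (hpos n).ne') ?_
  have key : ∀ n : ℕ, ‖poch b (n+1) / (Nat.factorial (n+1) : ℝ) * r ^ (n+1)‖ /
      ‖poch b n / (Nat.factorial n : ℝ) * r ^ n‖ = (b + n) / (1 + n) * r := by
    intro n
    rw [Real.norm_of_nonneg (hpos (n+1)).le, Real.norm_of_nonneg (hpos n).le,
      poch_succ, Nat.factorial_succ, pow_succ]
    have h1 : poch b n ≠ 0 := (poch_pos hb n).ne'
    have h2 : (Nat.factorial n : ℝ) ≠ 0 := by positivity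
    have h3 : r ^ n ≠ 0 := by positivity
    have h4 : ((n:ℝ) + 1) ≠ 0 := by positivity
    field_simp
    push_cast; ring
  simp only [key]
  simpa using (nat_ratio_tendsto b 1).mul_const r

lemma binom_tsum (hb : 0 < b) {r : ℝ} (hr0 : 0 < r) (hr1 : r < 1) :
    ∑' n : ℕ, poch b n / (Nat.factorial n : ℝ) * r ^ n = (1 - r) ^ (-b) := by
  set c : ℕ → ℝ := fun n => poch b n / (Nat.factorial n : ℝ) with hc
  have hcpos : ∀ n, 0 < c n := fun n => by
    have h1 := poch_pos hb n
    have h2 : (0:ℝ) < Nat.factorial n := by positivity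
    simp only [hc]; positivity
  have hcc : ∀ n : ℕ, c (n + 1) * ((n:ℝ) + 1) = c n * (b + n) := by
    intro n
    simp only [hc, poch_succ, Nat.factorial_succ, Nat.cast_mul, Nat.cast_add, Nat.cast_one]
    have h2 : (Nat.factorial n : ℝ) ≠ 0 := by positivity
    have h4 : ((n:ℝ) + 1) ≠ 0 := by positivity
    field_simp
  have hc0 : c 0 = 1 := by simp [hc, poch_zero]
  have hcsum : ∀ {y : ℝ}, 0 < y → y < 1 → Summable (fun n => c n * y ^ n) := by
    intro y h0 h1
    have := summable_c hb h0 h1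
    refine this.congr fun n => by rw [hc]
  clear_value c
  set ρ : ℝ := (1 + r) / 2 with hρ
  have hρr : r < ρ := by rw [hρ]; linarith
  have hρ1 : ρ < 1 := by rw [hρ]; linarith
  have hρ0 : 0 < ρ := by rw [hρ]; linarith
  clear_value ρ
  clear hρ
  set g : ℕ → ℝ → ℝ := fun n y => c n * y ^ n with hg
  set g' : ℕ → ℝ → ℝ := fun n y => c n * (n * y ^ (n - 1)) with hg'
  set u : ℕ → ℝ := fun n => c n * (n * ρ ^ (n - 1)) with hu'
  have hupos : ∀ n : ℕ, 0 < u (n + 1) := by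
    intro n
    have h1 := hcpos (n + 1)
    have h3 : (0:ℝ) < ρ ^ (n + 1 - 1) := by positivity
    have h4 : (0:ℝ) < ((n:ℝ) + 1) := by positivity
    simp only [hu', Nat.cast_add, Nat.cast_one]
    positivity
  -- summability of the derivative bound
  have hu : Summable u := by
    refine summable_of_ratio_test_tendsto_lt_one hρ1 ?_ ?_
    · filter_upwards [eventually_ge_atTop 1] with n hn
      obtain ⟨m, rfl⟩ : ∃ m, n = m + 1 := ⟨n - 1, by omega⟩
      exact (hupos m).ne'
    · have base : Tendsto (fun n : ℕ => (b + n) / (0 + n) * ρ) atTop (𝓝 ρ) := by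
        simpa using (nat_ratio_tendsto b 0).mul_const ρ
      refine base.congr' ?_
      filter_upwards [eventually_ge_atTop 1] with n hn
      obtain ⟨m, rfl⟩ : ∃ m, n = m + 1 := ⟨n - 1, by omega⟩
      rw [Real.norm_of_nonneg (hupos (m+1)).le, Real.norm_of_nonneg (hupos m).le]
      simp only [hu', Nat.add_sub_cancel]
      have key := hcc (m + 1)
      push_cast at key ⊢
      rw [pow_succ]
      have h1 := (hcpos (m+1)).ne'
      have h2 : ((m:ℝ) + 1) ≠ 0 := by positivity
      have h3 : ρ ^ m ≠ 0 := by positivity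
      have h4 : ρ ≠ 0 := hρ0.ne'
      field_simp
      linear_combination (-((m:ℝ) + 1)) * key
  -- the open interval
  have hmem : ∀ y ∈ Set.Icc (0:ℝ) r, y ∈ Set.Ioo (-ρ) ρ := fun y hy =>
    ⟨by nlinarith [hy.1], by nlinarith [hy.2]⟩
  have hderiv : ∀ (n : ℕ) (y : ℝ), y ∈ Set.Ioo (-ρ) ρ → HasDerivAt (g n) (g' n y) y := by
    intro n y _
    simpa only [hg, hg'] using (hasDerivAt_pow n y).const_mul (c n)
  have hbound : ∀ (n : ℕ) (y : ℝ), y ∈ Set.Ioo (-ρ) ρ → ‖g' n y‖ ≤ u n := by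
    intro n y hy
    have hyρ : |y| ≤ ρ := le_of_lt (abs_lt.2 ⟨hy.1, hy.2⟩)
    simp only [hg', hu']
    rw [norm_mul, norm_mul, norm_pow, Real.norm_of_nonneg (hcpos n).le,
      Real.norm_natCast]
    have h1 : |y| ^ (n - 1) ≤ ρ ^ (n - 1) := pow_le_pow_left₀ (abs_nonneg y) hyρ _
    have h2 : (n : ℝ) * |y| ^ (n - 1) ≤ (n : ℝ) * ρ ^ (n - 1) :=
      mul_le_mul_of_nonneg_left h1 (Nat.cast_nonneg n)
    exact mul_le_mul_of_nonneg_left h2 (hcpos n).le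
  have h0mem : (0:ℝ) ∈ Set.Ioo (-ρ) ρ := ⟨by linarith, hρ0⟩
  have hsum0 : Summable fun n => g n 0 := by
    apply summable_of_ne_finset_zero (s := {0})
    intro n hn
    simp only [Finset.mem_singleton] at hn
    simp [hg, zero_pow hn]
  -- the sum function and its derivative
  set f : ℝ → ℝ := fun y => ∑' n, g n y with hf
  have hfd : ∀ y ∈ Set.Ioo (-ρ) ρ, HasDerivAt f (∑' n, g' n y) y := by
    intro y hy
    exact hasDerivAt_tsum_of_isPreconnected hu isOpen_Ioo
      (convex_Ioo _ _).isPreconnected hderiv hbound h0mem hsum0 hy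
  -- the ODE
  have hode : ∀ y ∈ Set.Ioo (-ρ) ρ, (1 - y) * (∑' n, g' n y) = b * f y := by
    intro y hy
    have hsg' : Summable fun n => g' n y :=
      hu.of_norm_bounded fun n => hbound n y hy
    have hsgy : Summable fun n => g n y := by
      refine (hcsum hρ0 hρ1).of_norm_bounded fun n => ?_
      have hyρ : |y| ≤ ρ := le_of_lt (abs_lt.2 ⟨hy.1, hy.2⟩)
      simp only [hg]
      rw [norm_mul, norm_pow, Real.norm_of_nonneg (hcpos n).le]
      exact mul_le_mul_of_nonneg_left (pow_le_pow_left₀ (abs_nonneg y) hyρ _) (hcpos n).le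
    have hshift : Summable fun n => g' (n + 1) y := (_root_.summable_nat_add_iff (f := fun n => g' n y) 1).2 hsg'
    have e1 : ∑' n, g' n y = ∑' n, g' (n + 1) y := by
      rw [Summable.tsum_eq_zero_add hsg']
      simp [hg']
    have e2 : y * (∑' n, g' n y) = ∑' n, (y * g' n y) := (tsum_mul_left).symm
    have e3 : (1 - y) * (∑' n, g' n y) = (∑' n, g' (n+1) y) - ∑' n, (y * g' n y) := by
      rw [sub_mul, one_mul, ← e1, e2]
    rw [e3, ← Summable.tsum_sub hshift (hsg'.mul_left y), hf, ← tsum_mul_left]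
    apply tsum_congr
    intro n
    simp only [hg', hg]
    cases n with
    | zero =>
      have h00 := hcc 0
      push_cast at h00
      norm_num at h00 ⊢
      rw [h00, mul_comm]
    | succ m =>
      simp only [Nat.add_sub_cancel]
      have key := hcc (m + 1)
      push_cast at key ⊢
      linear_combination (y ^ (m + 1)) * key
  -- the auxiliary function f y * (1-y)^b is constant on [0, r]
  set F : ℝ → ℝ := fun y => f y * (1 - y) ^ b with hF
  have hFd : ∀ y ∈ Set.Icc (0:ℝ) r, HasDerivAt F 0 y := by
    intro y hy
    have hyt := hmem y hy
    have h1y : 0 < 1 - y := by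
      have := hy.2
      linarith
    have hrp : HasDerivAt (fun z : ℝ => (1 - z) ^ b) (b * (1 - y) ^ (b - 1) * -1) y := by
      have inner : HasDerivAt (fun z : ℝ => 1 - z) (-1) y := (hasDerivAt_id y).const_sub 1
      exact (Real.hasDerivAt_rpow_const (Or.inl h1y.ne')).comp y inner
    have hmulF := (hfd y hyt).mul hrp
    have hzero : (∑' n, g' n y) * (1 - y) ^ b + f y * (b * (1 - y) ^ (b - 1) * -1) = 0 := by
      have hsplit : (1 - y) ^ b = (1 - y) * (1 - y) ^ (b - 1) := by
        have h := Real.rpow_add h1y 1 (b - 1)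
        rw [Real.rpow_one] at h
        rw [show (1:ℝ) + (b - 1) = b by ring] at h
        exact h
      rw [hsplit]
      have := hode y hyt
      linear_combination ((1 - y) ^ (b - 1)) * this
    rw [hF]
    exact hmulF.congr_deriv hzero
  have hcont : ContinuousOn F (Set.Icc 0 r) := fun y hy =>
    (hFd y hy).continuousAt.continuousWithinAt
  have hconst := constant_of_has_deriv_right_zero hcont
    (fun y hy => (hFd y (Set.mem_Icc_of_Ico hy)).hasDerivWithinAt) r
    (Set.right_mem_Icc.2 hr0.le)
  -- F 0 = 1
  have hf0 : f 0 = 1 := by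
    simp only [hf]
    rw [tsum_eq_single 0 (fun n hn => by simp [hg, zero_pow hn])]
    simp [hg, hc0]
  have hF0 : F 0 = 1 := by
    simp only [hF]
    simp [hf0, Real.one_rpow]
  rw [hF0] at hconst
  -- conclude
  have h1r : 0 < 1 - r := by linarith
  have hpow : (0:ℝ) < (1 - r) ^ b := Real.rpow_pos_of_pos h1r b
  have hfr : f r = (1 - r) ^ (-b) := by
    have : f r * (1 - r) ^ b = 1 := hconst
    rw [Real.rpow_neg h1r.le]
    field_simp at this ⊢
    linarith [this]
  rw [← hfr]
  simp only [hf, hg, hc]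


/-- F_b(λ;x) := Σ_{n=0}^∞ (a+ελ)_n·(b)_n/((c+λ)_n·n!)·x^n, the Gauss
    hypergeometric function F(a+ελ, b; c+λ; x). -/
noncomputable def Fb (a c ε lam x b : ℝ) : ℝ :=
  ∑' n : ℕ, poch (a + ε * lam) n * poch b n / (poch (c + lam) n * (Nat.factorial n : ℝ)) * x ^ n

/-- For b > 0, ε > 1 and 0 < x < 1/ε, F_b(λ;x) → (1−εx)^{−b} as λ → +∞. -/
theorem stmt_12 (a c b ε x : ℝ) (hb : 0 < b) (hε : 1 < ε) (hx0 : 0 < x) (hx1 : x < 1 / ε) :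
    Tendsto (fun lam : ℝ => Fb a c ε lam x b) atTop (nhds ((1 - ε * x) ^ (-b))) := by
  have hε0 : 0 < ε := by linarith
  have hεx1 : ε * x < 1 := by
    have := (lt_div_iff₀ hε0).mp hx1
    linarith [this]
  have hεx0 : 0 < ε * x := by positivity
  have hε1x : ε < 1 / x := (lt_div_iff₀ hx0).mpr (by linarith)
  set M : ℝ := (ε + 1 / x) / 2 with hM
  have hMε : ε < M := by rw [hM]; linarith
  have hM1x : M < 1 / x := by rw [hM]; linarith
  have hM0 : 0 < M := by linarith
  have hM1 : 1 < M := by linarith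
  have hMx1 : M * x < 1 := (lt_div_iff₀ hx0).mp hM1x
  have hMx0 : 0 < M * x := by positivity
  clear_value M
  -- pointwise convergence of the Pochhammer ratio
  have hratio : ∀ n : ℕ, Tendsto (fun lam : ℝ =>
      poch (a + ε * lam) n / poch (c + lam) n) atTop (𝓝 (ε ^ n)) := by
    intro n
    induction n with
    | zero => simpa [poch_zero] using (tendsto_const_nhds : Tendsto (fun _ : ℝ => (1:ℝ)) atTop _)
    | succ n ih =>
      have hmul := ih.mul (lam_ratio_tendsto (a + n) (c + n) ε)
      rw [pow_succ]
      refine hmul.congr' ?_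
      filter_upwards [eventually_gt_atTop (-c), eventually_gt_atTop (-c - n)] with lam h1 h2
      have hp : 0 < c + lam := by linarith
      have hpn : (0:ℝ) < c + n + lam := by linarith
      have hpoch : poch (c + lam) n ≠ 0 := (poch_pos hp n).ne'
      rw [poch_succ, poch_succ]
      field_simp
      ring
  -- pointwise convergence of each term
  have hterm : ∀ n : ℕ, Tendsto (fun lam : ℝ =>
      poch (a + ε * lam) n * poch b n / (poch (c + lam) n * (Nat.factorial n : ℝ)) * x ^ n)
      atTop (𝓝 (poch b n / (Nat.factorial n : ℝ) * (ε * x) ^ n)) := by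
    intro n
    have hfac : (0:ℝ) < Nat.factorial n := by positivity
    have base := (hratio n).mul_const (poch b n / (Nat.factorial n : ℝ) * x ^ n)
    have heq : ε ^ n * (poch b n / (Nat.factorial n : ℝ) * x ^ n)
        = poch b n / (Nat.factorial n : ℝ) * (ε * x) ^ n := by
      rw [mul_pow]; ring
    rw [heq] at base
    refine base.congr' ?_
    filter_upwards [eventually_gt_atTop (-c)] with lam h1
    have hp : 0 < c + lam := by linarith
    have hpoch : poch (c + lam) n ≠ 0 := (poch_pos hp n).ne'
    field_simp
  -- the uniform bound
  have hbound : ∀ᶠ lam in atTop, ∀ n : ℕ,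
      ‖poch (a + ε * lam) n * poch b n / (poch (c + lam) n * (Nat.factorial n : ℝ)) * x ^ n‖
        ≤ poch b n / (Nat.factorial n : ℝ) * (M * x) ^ n := by
    filter_upwards [eventually_gt_atTop (-c), eventually_ge_atTop ((c - a) / (ε - 1)),
      eventually_ge_atTop ((a - M * c) / (M - ε))] with lam h1 h2 h3
    have hcl : 0 < c + lam := by linarith
    have hge : c + lam ≤ a + ε * lam := by
      have h2' := (div_le_iff₀ (by linarith : (0:ℝ) < ε - 1)).mp h2
      nlinarith
    have hal : 0 < a + ε * lam := lt_of_lt_of_le hcl hge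
    have hMle : a + ε * lam ≤ M * (c + lam) := by
      have h3' := (div_le_iff₀ (by linarith : (0:ℝ) < M - ε)).mp h3
      nlinarith
    intro n
    have key : poch (a + ε * lam) n ≤ M ^ n * poch (c + lam) n := by
      induction n with
      | zero => simp [poch_zero]
      | succ k ihk =>
        rw [poch_succ, poch_succ, pow_succ]
        have e1 : (0:ℝ) < a + ε * lam + k := add_pos_of_pos_of_nonneg hal (Nat.cast_nonneg k)
        have e2 : (0:ℝ) < c + lam + k := add_pos_of_pos_of_nonneg hcl (Nat.cast_nonneg k)
        have hMk : (k:ℝ) ≤ M * k := le_mul_of_one_le_left (Nat.cast_nonneg k) hM1.le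
        have e3 : a + ε * lam + k ≤ M * (c + lam + k) := by
          have expand : M * (c + lam + k) = M * (c + lam) + M * k := by ring
          linarith
        calc poch (a + ε * lam) k * (a + ε * lam + k)
            ≤ (M ^ k * poch (c + lam) k) * (a + ε * lam + k) :=
              mul_le_mul_of_nonneg_right ihk e1.le
          _ ≤ (M ^ k * poch (c + lam) k) * (M * (c + lam + k)) := by
              refine mul_le_mul_of_nonneg_left e3 ?_
              have := poch_pos hcl k
              positivity
          _ = M ^ k * M * (poch (c + lam) k * (c + lam + k)) := by ring
    have hpc := poch_pos hcl n
    have hpa := poch_pos hal n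
    have hpb := poch_pos hb n
    have hfac : (0:ℝ) < Nat.factorial n := by positivity
    rw [Real.norm_of_nonneg (by positivity)]
    have step : poch (a + ε * lam) n * poch b n / (poch (c + lam) n * (Nat.factorial n : ℝ)) * x ^ n
        ≤ (M ^ n * poch (c + lam) n) * poch b n / (poch (c + lam) n * (Nat.factorial n : ℝ)) * x ^ n := by
      gcongr
    refine step.trans_eq ?_
    rw [mul_pow]
    field_simp
  -- conclude via dominated convergence for sums
  have hsumbound : Summable (fun n : ℕ => poch b n / (Nat.factorial n : ℝ) * (M * x) ^ n) :=
    summable_c hb hMx0 hMx1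
  have hmain := tendsto_tsum_of_dominated_convergence hsumbound hterm hbound
  rw [binom_tsum hb hεx0 hεx1] at hmain
  exact hmain
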